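/- arXiv:2207.12216 — 2 statements merged into one kernel-verified Lean document; each statement's English description precedes it below -/
import Mathlib

section
/- S^2 is an algebra under pointwise multiplication: if f, g ∈ S^2 then fg ∈ S^2, with ‖fg‖_{S^2} ≤ C ‖f‖_{S^2} ‖g‖_{S^2} for an absolute constant C (one may take C = (1 + 4π^2/3)^{1/2}). -/
open Metric Filter

noncomputable def taylorCoeff (f : ℂ → ℂ) (n : ℕ) : ℂ :=
  iteratedDeriv n f 0 / n.factorial

/-- Membership in `S²`: `f` is analytic on the open unit disk, equals its Taylor
series there, and its coefficients satisfy `Σ n² |a n|² < ∞`. -/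
def MemS2 (f : ℂ → ℂ) : Prop :=
  AnalyticOn ℂ f (ball (0:ℂ) 1) ∧
  (∀ z ∈ ball (0:ℂ) 1, HasSum (fun n : ℕ => taylorCoeff f n * z ^ n) (f z)) ∧
  Summable (fun n : ℕ => ((n : ℝ))^2 * ‖taylorCoeff f n‖^2)

/-- The square of the `S²` norm: `|a₀|² + Σ_{n≥1} n² |aₙ|²`. -/
noncomputable def s2NormSq (f : ℂ → ℂ) : ℝ :=
  ‖taylorCoeff f 0‖^2 + ∑' n : ℕ, ((n : ℝ) + 1)^2 * ‖taylorCoeff f (n+1)‖^2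

noncomputable def s2Norm (f : ℂ → ℂ) : ℝ := Real.sqrt (s2NormSq f)

/-- The square of the `H²` norm, in terms of Taylor coefficients. -/
noncomputable def h2NormSq (f : ℂ → ℂ) : ℝ := ∑' n : ℕ, ‖taylorCoeff f n‖^2

noncomputable def h2Norm (f : ℂ → ℂ) : ℝ := Real.sqrt (h2NormSq f)

/-- An operator on functions is bounded on `S²`. -/
def BoundedOpS2 (T : (ℂ → ℂ) → (ℂ → ℂ)) : Prop :=
  (∀ f, MemS2 f → MemS2 (T f)) ∧
  ∃ C : ℝ, ∀ f, MemS2 f → s2Norm (T f) ≤ C * s2Norm f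

/-- The operator norm of an operator on `S²`. -/
noncomputable def opNormS2 (T : (ℂ → ℂ) → (ℂ → ℂ)) : ℝ :=
  sInf {C : ℝ | 0 ≤ C ∧ ∀ f, MemS2 f → s2Norm (T f) ≤ C * s2Norm f}

/-- An (analytic) automorphism of the unit disk. -/
def IsDiskAut (φ : ℂ → ℂ) : Prop :=
  AnalyticOn ℂ φ (ball (0:ℂ) 1) ∧ Set.BijOn φ (ball (0:ℂ) 1) (ball (0:ℂ) 1)

open Finset

-- ℓ¹ bound from weighted ℓ²
lemma ell1_summable {a : ℕ → ℂ} (h : Summable fun n : ℕ => ((n : ℝ))^2 * ‖a n‖^2) :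
    Summable fun n => ‖a n‖ := by
  rw [← summable_nat_add_iff 1]
  have hmaj : Summable fun n : ℕ =>
      (((n+1 : ℕ) : ℝ)^2 * ‖a (n+1)‖^2 + 1/((n:ℝ)+1)^2) / 2 := by
    apply Summable.div_const
    apply Summable.add ((summable_nat_add_iff 1).2 h)
    have : Summable fun n : ℕ => 1/((n:ℝ))^2 := hasSum_zeta_two.summable
    simpa using (summable_nat_add_iff 1).2 this
  apply Summable.of_nonneg_of_le (fun n => norm_nonneg _) (fun n => ?_) hmaj
  have h1 : (0:ℝ) < (n:ℝ)+1 := by positivity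
  have h2 := two_mul_le_add_sq (((n:ℝ)+1) * ‖a (n+1)‖) (1/((n:ℝ)+1))
  have h3 : (((n:ℝ)+1) * ‖a (n+1)‖) * (1/((n:ℝ)+1)) = ‖a (n+1)‖ := by field_simp
  have h4 : (((n+1:ℕ):ℝ))^2 = ((n:ℝ)+1)^2 := by push_cast; ring
  have h5 : (1/((n:ℝ)+1))^2 = 1/((n:ℝ)+1)^2 := by rw [div_pow, one_pow]
  have h6 : (((n:ℝ)+1) * ‖a (n+1)‖)^2 = ((n:ℝ)+1)^2 * ‖a (n+1)‖^2 := by ring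
  nlinarith [h2, h3, h4, h5, h6]

lemma summable_mul_of_sq {u v : ℕ → ℝ} (hu : Summable fun n => u n^2)
    (hv : Summable fun n => v n^2) : Summable fun n => u n * v n := by
  apply Summable.of_abs
  apply Summable.of_nonneg_of_le (fun n => abs_nonneg _)
    (fun n => ?_) ((hu.add hv).div_const 2)
  rw [abs_mul]
  nlinarith [sq_nonneg (|u n| - |v n|), sq_abs (u n), sq_abs (v n),
    abs_nonneg (u n), abs_nonneg (v n)]

lemma tsum_mul_sq_le {u v : ℕ → ℝ} (hu0 : ∀ n, 0 ≤ u n) (hv0 : ∀ n, 0 ≤ v n)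
    (hu : Summable fun n => u n^2) (hv : Summable fun n => v n^2) :
    (∑' n, u n * v n)^2 ≤ (∑' n, u n^2) * (∑' n, v n^2) := by
  set C := (∑' n, u n^2) * (∑' n, v n^2) with hC
  have hC0 : 0 ≤ C := mul_nonneg (tsum_nonneg fun n => sq_nonneg _) (tsum_nonneg fun n => sq_nonneg _)
  have key : ∀ s : Finset ℕ, ∑ n ∈ s, u n * v n ≤ Real.sqrt C := by
    intro s
    have h1 : (∑ n ∈ s, u n * v n)^2 ≤ (∑ n ∈ s, u n^2) * (∑ n ∈ s, v n^2) :=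
      sum_mul_sq_le_sq_mul_sq s u v
    have h2 : (∑ n ∈ s, u n^2) * (∑ n ∈ s, v n^2) ≤ C := by
      apply mul_le_mul (Summable.sum_le_tsum s (fun n _ => sq_nonneg _) hu)
        (Summable.sum_le_tsum s (fun n _ => sq_nonneg _) hv)
        (Finset.sum_nonneg fun n _ => sq_nonneg _) (tsum_nonneg fun n => sq_nonneg _)
    have h3 : (0:ℝ) ≤ ∑ n ∈ s, u n * v n :=
      Finset.sum_nonneg fun n _ => mul_nonneg (hu0 n) (hv0 n)
    rw [show Real.sqrt C = Real.sqrt C from rfl]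
    have := Real.le_sqrt h3 (y := C)
    exact (this hC0).2 (le_trans h1 h2)
  have h4 : ∑' n, u n * v n ≤ Real.sqrt C :=
    Summable.tsum_le_of_sum_le (summable_mul_of_sq hu hv) key
  have h5 : (0:ℝ) ≤ ∑' n, u n * v n := tsum_nonneg fun n => mul_nonneg (hu0 n) (hv0 n)
  calc (∑' n, u n * v n)^2 ≤ (Real.sqrt C)^2 := by gcongr
    _ = C := Real.sq_sqrt hC0

lemma summable_of_nonneg_real {v : ℕ → ℝ} (hv0 : ∀ n, 0 ≤ v n) (hv : Summable v) :
    Summable fun n => ‖v n‖ := by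
  simpa only [Real.norm_eq_abs, abs_of_nonneg (hv0 _)] using hv

/-- Young: convolution of ℓ² with ℓ¹, squared sums. -/
lemma young_sq {u v : ℕ → ℝ} (hu0 : ∀ n, 0 ≤ u n) (hv0 : ∀ n, 0 ≤ v n)
    (hu : Summable fun n => u n^2) (hv : Summable v) :
    (Summable fun n => (∑ k ∈ Finset.range (n+1), u k * v (n-k))^2) ∧
    ∑' n, (∑ k ∈ Finset.range (n+1), u k * v (n-k))^2 ≤
      (∑' n, u n^2) * (∑' n, v n)^2 := by
  set V := ∑' n, v n with hV
  have hV0 : 0 ≤ V := tsum_nonneg hv0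
  set t : ℕ → ℝ := fun n => ∑ k ∈ Finset.range (n+1), u k^2 * v (n-k) with ht
  have ht0 : ∀ n, 0 ≤ t n := fun n =>
    Finset.sum_nonneg fun k _ => mul_nonneg (sq_nonneg _) (hv0 _)
  -- t is the Cauchy product of u² and v
  have htsum : HasSum t ((∑' n, u n^2) * V) := by
    apply hasSum_sum_range_mul_of_summable_norm
    · exact summable_of_nonneg_real (fun n => sq_nonneg _) hu
    · exact summable_of_nonneg_real hv0 hv
  -- pointwise bound
  have key : ∀ n, (∑ k ∈ Finset.range (n+1), u k * v (n-k))^2 ≤ V * t n := by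
    intro n
    have h1 : (∑ k ∈ Finset.range (n+1), u k * v (n-k))^2 ≤
        (∑ k ∈ Finset.range (n+1), u k^2 * v (n-k)) *
        (∑ k ∈ Finset.range (n+1), v (n-k)) := by
      have := Finset.sum_mul_sq_le_sq_mul_sq (Finset.range (n+1))
        (fun k => u k * Real.sqrt (v (n-k))) (fun k => Real.sqrt (v (n-k)))
      simp only [mul_pow, Real.sq_sqrt (hv0 _)] at this
      calc (∑ k ∈ Finset.range (n+1), u k * v (n-k))^2
          = (∑ k ∈ Finset.range (n+1),
              (u k * Real.sqrt (v (n-k))) * Real.sqrt (v (n-k)))^2 := by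
            congr 1; apply Finset.sum_congr rfl; intro k _
            rw [mul_assoc, Real.mul_self_sqrt (hv0 _)]
        _ ≤ (∑ k ∈ Finset.range (n+1), u k^2 * v (n-k)) *
            (∑ k ∈ Finset.range (n+1), v (n-k)) := this
    have h2 : (∑ k ∈ Finset.range (n+1), v (n-k)) ≤ V := by
      rw [← Finset.sum_range_reflect]
      simp only [Nat.add_sub_cancel]
      rw [Finset.sum_congr rfl (fun k hk => by
        rw [Nat.sub_sub_self (Nat.lt_succ_iff.mp (Finset.mem_range.mp hk))])]
      exact Summable.sum_le_tsum (Finset.range (n+1)) (fun k _ => hv0 k) hv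
    calc (∑ k ∈ Finset.range (n+1), u k * v (n-k))^2
        ≤ t n * (∑ k ∈ Finset.range (n+1), v (n-k)) := h1
      _ ≤ t n * V := by gcongr; exact ht0 n
      _ = V * t n := mul_comm _ _
  have hsum2 : Summable fun n => V * t n := (htsum.summable).mul_left V
  have hsummable : Summable fun n => (∑ k ∈ Finset.range (n+1), u k * v (n-k))^2 :=
    Summable.of_nonneg_of_le (fun n => sq_nonneg _) key hsum2
  refine ⟨hsummable, ?_⟩
  calc ∑' n, (∑ k ∈ Finset.range (n+1), u k * v (n-k))^2
      ≤ ∑' n, V * t n := Summable.tsum_le_tsum key hsummable hsum2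
    _ = V * ∑' n, t n := tsum_mul_left
    _ = V * ((∑' n, u n^2) * V) := by rw [htsum.tsum_eq]
    _ = (∑' n, u n^2) * V^2 := by ring

lemma taylorCoeff_eq_of_hasSum {h : ℂ → ℂ} {c : ℕ → ℂ}
    (hc : Summable fun n => ‖c n‖)
    (hrep : ∀ z ∈ ball (0:ℂ) 1, HasSum (fun n => c n * z ^ n) (h z)) (n : ℕ) :
    taylorCoeff h n = c n := by
  set p := FormalMultilinearSeries.ofScalars ℂ c with hp
  have hcoeff : ∀ m, p m (fun _ => (1:ℂ)) = c m := by
    intro m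
    rw [hp, FormalMultilinearSeries.ofScalars_apply_eq]
    simp
  have hnorm : ∀ m, ‖p m‖ = ‖c m‖ := by
    intro m
    rw [FormalMultilinearSeries.norm_apply_eq_norm_coef]
    show ‖p m 1‖ = _
    rw [show (1 : Fin m → ℂ) = (fun _ => (1:ℂ)) from rfl, hcoeff]
  have hball : HasFPowerSeriesOnBall h p 0 1 := by
    refine ⟨?_, one_pos, ?_⟩
    · rw [← ENNReal.coe_one]
      apply p.le_radius_of_summable
      simpa [hnorm] using hc
    · intro y hy
      have hy' : y ∈ ball (0:ℂ) 1 := by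
        simp only [EMetric.mem_ball, edist_zero_right, ← ENNReal.coe_one,
          ENNReal.coe_lt_coe, ← NNReal.coe_lt_coe, coe_nnnorm] at hy
        simpa [mem_ball_zero_iff, ← ofReal_norm, ENNReal.ofReal_lt_one] using hy
      have hs := hrep y hy'
      simp only [zero_add]
      convert hs using 2 with m
      · rfl
      rw [hp, FormalMultilinearSeries.ofScalars_apply_eq, smul_eq_mul]
  have hfact := hball.factorial_smul 1 n
  rw [hcoeff, ← iteratedDeriv_eq_iteratedFDeriv] at hfact
  rw [taylorCoeff, ← hfact, nsmul_eq_mul]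
  have : ((n.factorial : ℂ)) ≠ 0 := by exact_mod_cast n.factorial_ne_zero
  field_simp

lemma shift_summable {a : ℕ → ℂ} (h : Summable fun n : ℕ => ((n:ℝ))^2 * ‖a n‖^2) :
    Summable fun n : ℕ => ((n:ℝ)+1)^2 * ‖a (n+1)‖^2 := by
  have := (summable_nat_add_iff 1).2 h
  convert this using 2 with n
  · rfl
  push_cast
  ring

lemma tsum_shift_eq {a : ℕ → ℂ} (h : Summable fun n : ℕ => ((n:ℝ))^2 * ‖a n‖^2) :
    ∑' n : ℕ, ((n:ℝ))^2 * ‖a n‖^2 = ∑' n : ℕ, ((n:ℝ)+1)^2 * ‖a (n+1)‖^2 := by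
  rw [Summable.tsum_eq_zero_add h]
  simp only [Nat.cast_zero, ne_eq, OfNat.ofNat_ne_zero, not_false_eq_true, zero_pow, zero_mul,
    zero_add]
  congr 1 with n
  push_cast
  ring

lemma zeta_shift : ∑' n : ℕ, (1/((n:ℝ)+1))^2 = Real.pi^2/6 := by
  have hz := hasSum_zeta_two
  have h0 := hz.tsum_eq
  rw [Summable.tsum_eq_zero_add hz.summable] at h0
  simp only [Nat.cast_zero, ne_eq, OfNat.ofNat_ne_zero, not_false_eq_true, zero_pow, div_zero,
    zero_add] at h0
  rw [← h0]
  congr 1 with n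
  push_cast
  rw [div_pow, one_pow]

lemma ell1_sq_bound {a : ℕ → ℂ} (h : Summable fun n : ℕ => ((n:ℝ))^2 * ‖a n‖^2) :
    (∑' n, ‖a n‖)^2 ≤
      (1 + Real.pi^2/6) * (‖a 0‖^2 + ∑' n : ℕ, ((n:ℝ)+1)^2 * ‖a (n+1)‖^2) := by
  have ha1 := ell1_summable h
  have hshift := shift_summable h
  have hu : Summable fun n : ℕ => (1/((n:ℝ)+1))^2 := by
    have h1 : Summable fun n : ℕ => 1/((n:ℝ))^2 := hasSum_zeta_two.summable
    have := (summable_nat_add_iff 1).2 h1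
    convert this using 2 with n
    · rfl
    push_cast
    rw [div_pow, one_pow]
  have hv : Summable fun n : ℕ => (((n:ℝ)+1) * ‖a (n+1)‖)^2 := by
    convert hshift using 2 with n
    ring
  have hT := tsum_mul_sq_le (u := fun n => 1/((n:ℝ)+1))
    (v := fun n => ((n:ℝ)+1) * ‖a (n+1)‖)
    (fun n => by positivity) (fun n => by positivity) hu hv
  have hterm : ∀ n : ℕ, (1/((n:ℝ)+1)) * (((n:ℝ)+1) * ‖a (n+1)‖) = ‖a (n+1)‖ := by
    intro n
    have : ((n:ℝ)+1) ≠ 0 := by positivity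
    field_simp
  rw [tsum_congr hterm, zeta_shift] at hT
  have hv_eq : ∑' n : ℕ, (((n:ℝ)+1) * ‖a (n+1)‖)^2 = ∑' n : ℕ, ((n:ℝ)+1)^2 * ‖a (n+1)‖^2 :=
    tsum_congr fun n => by ring
  rw [hv_eq] at hT
  -- V = a0 + T
  rw [Summable.tsum_eq_zero_add ha1]
  set T := ∑' n, ‖a (n+1)‖ with hTdef
  set S := ∑' n : ℕ, ((n:ℝ)+1)^2 * ‖a (n+1)‖^2 with hS
  have hT0 : 0 ≤ T := tsum_nonneg fun n => norm_nonneg _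
  have hS0 : 0 ≤ S := tsum_nonneg fun n => by positivity
  have hA0 : 0 ≤ ‖a 0‖ := norm_nonneg _
  have hK : (0:ℝ) < Real.pi^2/6 := by positivity
  nlinarith [sq_nonneg ((Real.pi^2/6) * ‖a 0‖ - T), sq_nonneg (‖a 0‖ - T), hT]

lemma hasSum_prod {f g : ℂ → ℂ} {a b : ℕ → ℂ}
    (ha1 : Summable fun n => ‖a n‖) (hb1 : Summable fun n => ‖b n‖)
    (hfrep : ∀ z ∈ ball (0:ℂ) 1, HasSum (fun n => a n * z ^ n) (f z))
    (hgrep : ∀ z ∈ ball (0:ℂ) 1, HasSum (fun n => b n * z ^ n) (g z)) :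
    ∀ z ∈ ball (0:ℂ) 1, HasSum
      (fun n => (∑ k ∈ Finset.range (n+1), a k * b (n-k)) * z ^ n) (f z * g z) := by
  intro z hz
  have hz1 : ‖z‖ < 1 := mem_ball_zero_iff.mp hz
  have haz : Summable fun n => ‖a n * z ^ n‖ := by
    apply Summable.of_nonneg_of_le (fun n => norm_nonneg _) (fun n => ?_) ha1
    rw [norm_mul, norm_pow]
    calc ‖a n‖ * ‖z‖ ^ n ≤ ‖a n‖ * 1 :=
          mul_le_mul_of_nonneg_left (pow_le_one₀ (norm_nonneg z) hz1.le) (norm_nonneg _)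
      _ = ‖a n‖ := mul_one _
  have hbz : Summable fun n => ‖b n * z ^ n‖ := by
    apply Summable.of_nonneg_of_le (fun n => norm_nonneg _) (fun n => ?_) hb1
    rw [norm_mul, norm_pow]
    calc ‖b n‖ * ‖z‖ ^ n ≤ ‖b n‖ * 1 :=
          mul_le_mul_of_nonneg_left (pow_le_one₀ (norm_nonneg z) hz1.le) (norm_nonneg _)
      _ = ‖b n‖ := mul_one _
  have H := hasSum_sum_range_mul_of_summable_norm haz hbz
  rw [(hfrep z hz).tsum_eq, (hgrep z hz).tsum_eq] at H
  convert H using 2 with n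
  · rfl
  rw [Finset.sum_mul]
  apply Finset.sum_congr rfl
  intro k hk
  have hkn : k ≤ n := Nat.lt_succ_iff.mp (Finset.mem_range.mp hk)
  calc a k * b (n-k) * z ^ n = a k * b (n-k) * z ^ (k + (n-k)) := by
        rw [Nat.add_sub_cancel' hkn]
    _ = a k * z ^ k * (b (n-k) * z ^ (n-k)) := by rw [pow_add]; ring

set_option maxHeartbeats 1000000 in
theorem s2_is_algebra (f g : ℂ → ℂ) (hf : MemS2 f) (hg : MemS2 g) :
    MemS2 (fun z => f z * g z) ∧
      s2Norm (fun z => f z * g z) ≤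
        Real.sqrt (1 + 4 * Real.pi^2 / 3) * (s2Norm f * s2Norm g) := by
  obtain ⟨hfa, hfrep, hfsum⟩ := hf
  obtain ⟨hga, hgrep, hgsum⟩ := hg
  set a := taylorCoeff f with ha
  set b := taylorCoeff g with hb
  have ha1 : Summable fun n => ‖a n‖ := ell1_summable hfsum
  have hb1 : Summable fun n => ‖b n‖ := ell1_summable hgsum
  set c : ℕ → ℂ := fun n => ∑ k ∈ Finset.range (n+1), a k * b (n-k) with hc
  have hcrep := hasSum_prod ha1 hb1 hfrep hgrep
  have hc1 : Summable fun n => ‖c n‖ :=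
    summable_norm_sum_mul_range_of_summable_norm ha1 hb1
  have hcoeff : ∀ n, taylorCoeff (fun z => f z * g z) n = c n :=
    taylorCoeff_eq_of_hasSum hc1 hcrep
  -- ℓ² facts
  have hu1 : Summable (fun n : ℕ => ((n:ℝ) * ‖a n‖)^2) := by
    have h : ∀ n : ℕ, ((n:ℝ) * ‖a n‖)^2 = ((n:ℝ))^2 * ‖a n‖^2 := fun n => by ring
    rw [summable_congr h]; exact hfsum
  have hu2 : Summable (fun n : ℕ => ((n:ℝ) * ‖b n‖)^2) := by
    have h : ∀ n : ℕ, ((n:ℝ) * ‖b n‖)^2 = ((n:ℝ))^2 * ‖b n‖^2 := fun n => by ring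
    rw [summable_congr h]; exact hgsum
  obtain ⟨hw1sum, hw1le⟩ := young_sq (u := fun n => (n:ℝ) * ‖a n‖) (v := fun n => ‖b n‖)
    (fun n => by positivity) (fun n => norm_nonneg _) hu1 hb1
  obtain ⟨hw2sum, hw2le⟩ := young_sq (u := fun n => (n:ℝ) * ‖b n‖) (v := fun n => ‖a n‖)
    (fun n => by positivity) (fun n => norm_nonneg _) hu2 ha1
  set w1 : ℕ → ℝ := fun n => ∑ k ∈ Finset.range (n+1), ((k:ℝ) * ‖a k‖) * ‖b (n-k)‖ with hw1
  set w2 : ℕ → ℝ := fun n => ∑ k ∈ Finset.range (n+1), ((k:ℝ) * ‖b k‖) * ‖a (n-k)‖ with hw2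
  -- pointwise bound
  have key : ∀ n : ℕ, (n:ℝ) * ‖c n‖ ≤ w1 n + w2 n := by
    intro n
    have e1 : (n:ℂ) * c n =
        (∑ k ∈ Finset.range (n+1), (k:ℂ) * (a k * b (n-k))) +
        ∑ k ∈ Finset.range (n+1), ((n-k:ℕ):ℂ) * (a k * b (n-k)) := by
      rw [hc]
      simp only [Finset.mul_sum, ← Finset.sum_add_distrib]
      apply Finset.sum_congr rfl
      intro k hk
      have hkn : k ≤ n := Nat.lt_succ_iff.mp (Finset.mem_range.mp hk)
      have hcast : ((k:ℂ) + ((n-k:ℕ):ℂ)) = (n:ℂ) := by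
        rw [← Nat.cast_add, Nat.add_sub_cancel' hkn]
      rw [← hcast]; ring
    have hb1' : ‖(∑ k ∈ Finset.range (n+1), (k:ℂ) * (a k * b (n-k)))‖ ≤ w1 n := by
      refine le_trans (norm_sum_le _ _) (le_of_eq ?_)
      apply Finset.sum_congr rfl
      intro k _
      rw [norm_mul, norm_mul, Complex.norm_natCast]
      ring
    have hb2' : ‖(∑ k ∈ Finset.range (n+1), ((n-k:ℕ):ℂ) * (a k * b (n-k)))‖ ≤ w2 n := by
      refine le_trans (norm_sum_le _ _) (le_of_eq ?_)
      show _ = ∑ k ∈ Finset.range (n+1), ((k:ℝ) * ‖b k‖) * ‖a (n-k)‖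
      rw [← Finset.sum_range_reflect (fun k => ((k:ℝ) * ‖b k‖) * ‖a (n-k)‖) (n+1)]
      apply Finset.sum_congr rfl
      intro k hk
      have hkn : k ≤ n := Nat.lt_succ_iff.mp (Finset.mem_range.mp hk)
      simp only [Nat.add_sub_cancel]
      rw [Nat.sub_sub_self hkn, norm_mul, norm_mul, Complex.norm_natCast]
      ring
    calc (n:ℝ) * ‖c n‖ = ‖(n:ℂ) * c n‖ := by rw [norm_mul, Complex.norm_natCast]
      _ ≤ ‖(∑ k ∈ Finset.range (n+1), (k:ℂ) * (a k * b (n-k)))‖ +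
          ‖(∑ k ∈ Finset.range (n+1), ((n-k:ℕ):ℂ) * (a k * b (n-k)))‖ := by
          rw [e1]; exact norm_add_le _ _
      _ ≤ w1 n + w2 n := add_le_add hb1' hb2'
  have key2 : ∀ n : ℕ, ((n:ℝ))^2 * ‖c n‖^2 ≤ 2 * w1 n ^2 + 2 * w2 n ^2 := by
    intro n
    have h0 : 0 ≤ (n:ℝ) * ‖c n‖ := by positivity
    have := key n
    nlinarith [sq_nonneg (w1 n - w2 n)]
  have hmaj : Summable fun n => 2 * w1 n ^2 + 2 * w2 n ^2 :=
    (hw1sum.mul_left 2).add (hw2sum.mul_left 2)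
  have hCsum : Summable fun n : ℕ => ((n:ℝ))^2 * ‖c n‖^2 :=
    Summable.of_nonneg_of_le (fun n => by positivity) key2 hmaj
  -- MemS2
  have hmem : MemS2 (fun z => f z * g z) := by
    refine ⟨hfa.mul hga, ?_, ?_⟩
    · intro z hz
      have := hcrep z hz
      simp only [hcoeff]
      exact this
    · simp only [hcoeff]
      exact hCsum
  refine ⟨hmem, ?_⟩
  -- norm bound
  have hVf := ell1_sq_bound hfsum
  have hVg := ell1_sq_bound hgsum
  have hNf0 : 0 ≤ s2NormSq f := by
    apply add_nonneg (sq_nonneg _) (tsum_nonneg fun n => by positivity)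
  have hNg0 : 0 ≤ s2NormSq g := by
    apply add_nonneg (sq_nonneg _) (tsum_nonneg fun n => by positivity)
  have hSf_eq : ∑' n : ℕ, ((n:ℝ) * ‖a n‖)^2 = ∑' n : ℕ, ((n:ℝ)+1)^2 * ‖a (n+1)‖^2 := by
    rw [tsum_congr (fun n => by ring : ∀ n : ℕ, ((n:ℝ) * ‖a n‖)^2 = ((n:ℝ))^2 * ‖a n‖^2)]
    exact tsum_shift_eq hfsum
  have hSg_eq : ∑' n : ℕ, ((n:ℝ) * ‖b n‖)^2 = ∑' n : ℕ, ((n:ℝ)+1)^2 * ‖b (n+1)‖^2 := by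
    rw [tsum_congr (fun n => by ring : ∀ n : ℕ, ((n:ℝ) * ‖b n‖)^2 = ((n:ℝ))^2 * ‖b n‖^2)]
    exact tsum_shift_eq hgsum
  have hSfN : ∑' n : ℕ, ((n:ℝ) * ‖a n‖)^2 ≤ s2NormSq f := by
    rw [hSf_eq]
    simp only [s2NormSq]
    nlinarith [sq_nonneg ‖a 0‖]
  have hSgN : ∑' n : ℕ, ((n:ℝ) * ‖b n‖)^2 ≤ s2NormSq g := by
    rw [hSg_eq]
    simp only [s2NormSq]
    nlinarith [sq_nonneg ‖b 0‖]
  have hSf0 : 0 ≤ ∑' n : ℕ, ((n:ℝ) * ‖a n‖)^2 := tsum_nonneg fun n => sq_nonneg _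
  have hSg0 : 0 ≤ ∑' n : ℕ, ((n:ℝ) * ‖b n‖)^2 := tsum_nonneg fun n => sq_nonneg _
  have hK : (0:ℝ) ≤ 1 + Real.pi^2/6 := by positivity
  have m1 : (∑' n : ℕ, ((n:ℝ) * ‖a n‖)^2) * (∑' n : ℕ, ‖b n‖)^2 ≤
      s2NormSq f * ((1 + Real.pi^2/6) * s2NormSq g) :=
    mul_le_mul hSfN hVg (sq_nonneg _) hNf0
  have m2 : (∑' n : ℕ, ((n:ℝ) * ‖b n‖)^2) * (∑' n : ℕ, ‖a n‖)^2 ≤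
      s2NormSq g * ((1 + Real.pi^2/6) * s2NormSq f) :=
    mul_le_mul hSgN hVf (sq_nonneg _) hNg0
  have hC0 : ‖c 0‖^2 ≤ s2NormSq f * s2NormSq g := by
    have hc0 : c 0 = a 0 * b 0 := by simp [hc]
    have h1 : ‖a 0‖^2 ≤ s2NormSq f := by
      simp only [s2NormSq]
      nlinarith [tsum_nonneg (L := SummationFilter.unconditional ℕ) (fun n : ℕ => by positivity :
        ∀ n : ℕ, (0:ℝ) ≤ ((n:ℝ)+1)^2 * ‖a (n+1)‖^2)]
    have h2 : ‖b 0‖^2 ≤ s2NormSq g := by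
      simp only [s2NormSq]
      nlinarith [tsum_nonneg (L := SummationFilter.unconditional ℕ) (fun n : ℕ => by positivity :
        ∀ n : ℕ, (0:ℝ) ≤ ((n:ℝ)+1)^2 * ‖b (n+1)‖^2)]
    rw [hc0, norm_mul, mul_pow]
    exact mul_le_mul h1 h2 (sq_nonneg _) hNf0
  -- tsum chain
  have hsum_c : ∑' n : ℕ, ((n:ℝ))^2 * ‖c n‖^2 ≤
      2 * ((∑' n : ℕ, ((n:ℝ) * ‖a n‖)^2) * (∑' n : ℕ, ‖b n‖)^2) +
      2 * ((∑' n : ℕ, ((n:ℝ) * ‖b n‖)^2) * (∑' n : ℕ, ‖a n‖)^2) := by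
    calc ∑' n : ℕ, ((n:ℝ))^2 * ‖c n‖^2
        ≤ ∑' n, (2 * w1 n ^2 + 2 * w2 n ^2) := Summable.tsum_le_tsum key2 hCsum hmaj
      _ = 2 * (∑' n, w1 n ^2) + 2 * (∑' n, w2 n ^2) := by
          rw [Summable.tsum_add (hw1sum.mul_left 2) (hw2sum.mul_left 2), tsum_mul_left, tsum_mul_left]
      _ ≤ _ := by
          have := hw1le; have := hw2le
          gcongr
  have main : s2NormSq (fun z => f z * g z) ≤
      (1 + 4 * Real.pi^2 / 3) * (s2NormSq f * s2NormSq g) := by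
    have e0 : s2NormSq (fun z => f z * g z) =
        ‖c 0‖^2 + ∑' n : ℕ, ((n:ℝ)+1)^2 * ‖c (n+1)‖^2 := by
      simp only [s2NormSq, hcoeff]
    rw [e0, ← tsum_shift_eq hCsum]
    have hpi : Real.pi^2 > 9 := by nlinarith [Real.pi_gt_three, Real.pi_pos]
    have hNN : 0 ≤ s2NormSq f * s2NormSq g := mul_nonneg hNf0 hNg0
    nlinarith [hsum_c, m1, m2, hC0, hNN, hpi]
  -- sqrt
  have h314 : (0:ℝ) ≤ 1 + 4 * Real.pi^2 / 3 := by positivity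
  calc s2Norm (fun z => f z * g z)
      ≤ Real.sqrt ((1 + 4 * Real.pi^2 / 3) * (s2NormSq f * s2NormSq g)) :=
        Real.sqrt_le_sqrt main
    _ = Real.sqrt (1 + 4 * Real.pi^2 / 3) * (s2Norm f * s2Norm g) := by
        rw [Real.sqrt_mul h314, Real.sqrt_mul hNf0]
        rfl
end

section
/- The multiplication operator M_ψ is an isometry on S^2 if and only if ψ is a constant function of modulus one. -/
set_option maxHeartbeats 1000000


open Metric Filter

open FormalMultilinearSeries in
lemma taylorCoeff_eq {g : ℂ → ℂ} {a : ℕ → ℂ}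
    (h : ∀ᶠ z in nhds (0:ℂ), HasSum (fun n => a n * z ^ n) (g z)) (n : ℕ) :
    taylorCoeff g n = a n := by
  have hc : ∀ m, (ofScalars ℂ a).coeff m = a m := by
    intro m
    rw [show (ofScalars ℂ a).coeff m = ofScalars ℂ a m (fun _ => 1) from rfl,
      ofScalars_apply_eq]
    simp
  have hps : HasFPowerSeriesAt g (ofScalars ℂ a) 0 := by
    rw [hasFPowerSeriesAt_iff]
    filter_upwards [h] with z hz
    simpa [hc, smul_eq_mul, mul_comm, zero_add] using hz
  obtain ⟨r, hr⟩ := hps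
  have h1 := hr.factorial_smul (1:ℂ) n
  have h2 : iteratedDeriv n g 0 = iteratedFDeriv ℂ n g 0 (fun _ => 1) :=
    iteratedDeriv_eq_iteratedFDeriv
  have h3 : (ofScalars ℂ a) n (fun _ => (1:ℂ)) = a n := by
    rw [ofScalars_apply_eq]; simp
  rw [taylorCoeff, h2, ← h1, h3, nsmul_eq_mul]
  rw [mul_comm, mul_div_assoc, div_self (by exact_mod_cast n.factorial_ne_zero : (n.factorial:ℂ) ≠ 0), mul_one]

lemma hasSum_one (z : ℂ) :
    HasSum (fun n : ℕ => (if n = 0 then (1:ℂ) else 0) * z ^ n) 1 := by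
  have : (fun n : ℕ => (if n = 0 then (1:ℂ) else 0) * z ^ n)
      = fun n => if n = 0 then 1 else 0 := by
    funext n; split_ifs with h <;> simp [h]
  rw [this]; exact hasSum_ite_eq 0 1

lemma hasSum_id (z : ℂ) :
    HasSum (fun n : ℕ => (if n = 1 then (1:ℂ) else 0) * z ^ n) z := by
  have : (fun n : ℕ => (if n = 1 then (1:ℂ) else 0) * z ^ n)
      = fun n => if n = 1 then z else 0 := by
    funext n; split_ifs with h <;> simp [h]
  rw [this]; exact hasSum_ite_eq 1 z

lemma taylorCoeff_one (n : ℕ) :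
    taylorCoeff (fun _ : ℂ => (1:ℂ)) n = if n = 0 then 1 else 0 :=
  taylorCoeff_eq (Eventually.of_forall hasSum_one) n

lemma taylorCoeff_id (n : ℕ) :
    taylorCoeff (fun z : ℂ => z) n = if n = 1 then 1 else 0 :=
  taylorCoeff_eq (Eventually.of_forall hasSum_id) n

lemma memS2_one : MemS2 (fun _ : ℂ => (1:ℂ)) := by
  refine ⟨analyticOn_const, fun z _ => ?_, ?_⟩
  · simp only [taylorCoeff_one]; exact hasSum_one z
  · have : (fun n : ℕ => ((n:ℝ))^2 * ‖taylorCoeff (fun _ : ℂ => (1:ℂ)) n‖^2)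
        = fun _ => 0 := by
      funext n; rcases n with _ | n <;> simp [taylorCoeff_one]
    rw [this]; exact summable_zero

lemma memS2_id : MemS2 (fun z : ℂ => z) := by
  refine ⟨fun z _ => analyticAt_id.analyticWithinAt, fun z _ => ?_, ?_⟩
  · simp only [taylorCoeff_id]; exact hasSum_id z
  · have : (fun n : ℕ => ((n:ℝ))^2 * ‖taylorCoeff (fun z : ℂ => z) n‖^2)
        = fun n => if n = 1 then 1 else 0 := by
      funext n; by_cases h : n = 1 <;> simp [taylorCoeff_id, h]
    rw [this]
    exact summable_of_ne_finset_zero (s := {1}) (by intro n hn; simp at hn; simp [hn])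

lemma s2Norm_one : s2Norm (fun _ : ℂ => (1:ℂ)) = 1 := by
  have h : s2NormSq (fun _ : ℂ => (1:ℂ)) = 1 := by
    rw [s2NormSq]
    have : (fun n : ℕ => ((n:ℝ)+1)^2 * ‖taylorCoeff (fun _ : ℂ => (1:ℂ)) (n+1)‖^2)
        = fun _ => 0 := by
      funext n; simp [taylorCoeff_one]
    rw [this, tsum_zero]
    simp [taylorCoeff_one]
  rw [s2Norm, h, Real.sqrt_one]

lemma s2Norm_id : s2Norm (fun z : ℂ => z) = 1 := by
  have h : s2NormSq (fun z : ℂ => z) = 1 := by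
    rw [s2NormSq]
    have : ∑' n : ℕ, ((n:ℝ)+1)^2 * ‖taylorCoeff (fun z : ℂ => z) (n+1)‖^2 = 1 := by
      rw [tsum_eq_single 0]
      · simp [taylorCoeff_id]
      · intro n hn; simp [taylorCoeff_id, hn]
    rw [this]
    simp [taylorCoeff_id]
  rw [s2Norm, h, Real.sqrt_one]

lemma s2NormSq_eq_one {f : ℂ → ℂ} (h : s2Norm f = 1) : s2NormSq f = 1 := by
  rw [s2Norm] at h
  exact Real.sqrt_eq_one.mp h

theorem multiplication_isometry_iff (ψ : ℂ → ℂ) (hψ : MemS2 ψ) :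
    (∀ f : ℂ → ℂ, MemS2 f → s2Norm (fun z => ψ z * f z) = s2Norm f) ↔
      ∃ c : ℂ, ‖c‖ = 1 ∧ ∀ z ∈ ball (0:ℂ) 1, ψ z = c := by
  have hball : ball (0:ℂ) 1 ∈ nhds (0:ℂ) := ball_mem_nhds _ one_pos
  constructor
  · intro H
    obtain ⟨a, ha⟩ : ∃ a : ℕ → ℂ, taylorCoeff ψ = a := ⟨_, rfl⟩
    have hsψ : ∀ᶠ z in nhds (0:ℂ), HasSum (fun n => a n * z ^ n) (ψ z) :=
      eventually_of_mem hball (fun z hz => ha ▸ hψ.2.1 z hz)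
    -- E1 : from f = 1
    have E1 : s2NormSq ψ = 1 := by
      have h1 := H _ memS2_one
      rw [s2Norm_one] at h1
      have : (fun z => ψ z * 1) = ψ := by funext z; rw [mul_one]
      rw [this] at h1
      exact s2NormSq_eq_one h1
    -- coefficients of ψ · id
    have hsg : ∀ᶠ z in nhds (0:ℂ), HasSum
        (fun n : ℕ => (if n = 0 then 0 else a (n-1)) * z ^ n) (ψ z * z) := by
      filter_upwards [hsψ] with z hz
      have h1 : HasSum
          (fun n : ℕ => (if n + 1 = 0 then 0 else a (n+1-1)) * z ^ (n+1)) (ψ z * z) := by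
        have h2 := hz.mul_right z
        have e : (fun n : ℕ => (if n + 1 = 0 then 0 else a (n+1-1)) * z ^ (n+1))
            = fun n : ℕ => a n * z ^ n * z := by
          funext n
          rw [if_neg n.succ_ne_zero, Nat.add_sub_cancel, pow_succ]
          ring
        rw [e]; exact h2
      have h2 := (hasSum_nat_add_iff
        (f := fun n : ℕ => (if n = 0 then 0 else a (n-1)) * z ^ n) 1).mp h1
      simpa using h2
    have hcog : ∀ n, taylorCoeff (fun z => ψ z * z) n
        = if n = 0 then 0 else a (n-1) := taylorCoeff_eq hsg
    -- E2 : from f = id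
    have E2 : s2NormSq (fun z : ℂ => ψ z * z) = 1 := by
      have h1 := H _ memS2_id
      rw [s2Norm_id] at h1
      exact s2NormSq_eq_one h1
    have E2' : ∑' n : ℕ, ((n:ℝ)+1)^2 * ‖a n‖^2 = 1 := by
      rw [s2NormSq] at E2
      simp only [hcog] at E2
      simpa using E2
    -- summability facts
    have hsum0 : Summable (fun n : ℕ => ((n:ℝ))^2 * ‖a n‖^2) := by
      have := hψ.2.2; rwa [ha] at this
    have hsum1 : Summable (fun n : ℕ => ((n:ℝ)+1)^2 * ‖a (n+1)‖^2) := by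
      have h2 := (summable_nat_add_iff 1).mpr hsum0
      refine h2.congr fun n => ?_
      push_cast
      ring
    have hsumS : Summable (fun n : ℕ => ((n:ℝ)+1)^2 * ‖a n‖^2) := by
      rw [← summable_nat_add_iff 1]
      refine Summable.of_nonneg_of_le
        (fun n => mul_nonneg (sq_nonneg _) (sq_nonneg _)) (fun n => ?_)
        (hsum1.mul_left 4)
      push_cast
      have hx : (0:ℝ) ≤ ‖a (n+1)‖^2 := sq_nonneg _
      have hn : (0:ℝ) ≤ (n:ℝ) := Nat.cast_nonneg n
      nlinarith [mul_nonneg (by nlinarith : (0:ℝ) ≤ 3*(n:ℝ)^2 + 4*(n:ℝ)) hx]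
    have hsumL : Summable (fun n : ℕ => ((n:ℝ)+2)^2 * ‖a (n+1)‖^2) := by
      have h2 := (summable_nat_add_iff 1).mpr hsumS
      refine h2.congr fun n => ?_
      push_cast
      ring
    -- split E2'
    have split : ∑' n : ℕ, ((n:ℝ)+1)^2 * ‖a n‖^2
        = ‖a 0‖^2 + ∑' n : ℕ, ((n:ℝ)+2)^2 * ‖a (n+1)‖^2 := by
      rw [Summable.tsum_eq_zero_add hsumS]
      congr 1
      · norm_num
      · refine tsum_congr fun n => ?_
        push_cast
        ring
    have E1' : ‖a 0‖^2 + ∑' n : ℕ, ((n:ℝ)+1)^2 * ‖a (n+1)‖^2 = 1 := by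
      rw [s2NormSq, ha] at E1
      exact E1
    have key : ∑' n : ℕ, ((n:ℝ)+2)^2 * ‖a (n+1)‖^2
        = ∑' n : ℕ, ((n:ℝ)+1)^2 * ‖a (n+1)‖^2 := by
      have := split.symm.trans E2'
      linarith [E1', this]
    have hzero : ∀ n : ℕ, a (n+1) = 0 := by
      have hdiff : ∑' n : ℕ,
          (((n:ℝ)+2)^2 * ‖a (n+1)‖^2 - ((n:ℝ)+1)^2 * ‖a (n+1)‖^2) = 0 := by
        rw [Summable.tsum_sub hsumL hsum1, key, sub_self]
      have hsumd := hsumL.sub hsum1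
      have hnn : ∀ m : ℕ,
          0 ≤ ((m:ℝ)+2)^2 * ‖a (m+1)‖^2 - ((m:ℝ)+1)^2 * ‖a (m+1)‖^2 := by
        intro m
        have h1 : ((m:ℝ)+1)^2 ≤ ((m:ℝ)+2)^2 := by nlinarith [Nat.cast_nonneg (α := ℝ) m]
        nlinarith [sq_nonneg ‖a (m+1)‖]
      intro n
      have hle := Summable.le_tsum hsumd n (fun m _ => hnn m)
      rw [hdiff] at hle
      have heq : ((n:ℝ)+2)^2 * ‖a (n+1)‖^2 - ((n:ℝ)+1)^2 * ‖a (n+1)‖^2 = 0 :=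
        le_antisymm hle (hnn n)
      have hsq : ‖a (n+1)‖^2 = 0 := by nlinarith [Nat.cast_nonneg (α := ℝ) n]
      have := pow_eq_zero_iff (n := 2) (by norm_num) |>.mp hsq
      exact norm_eq_zero.mp this
    refine ⟨a 0, ?_, ?_⟩
    · have htz : ∑' n : ℕ, ((n:ℝ)+1)^2 * ‖a (n+1)‖^2 = 0 := by
        have : (fun n : ℕ => ((n:ℝ)+1)^2 * ‖a (n+1)‖^2) = fun _ => 0 := by
          funext n; simp [hzero n]
        rw [this, tsum_zero]
      rw [htz, add_zero] at E1'
      rw [← Real.sqrt_sq (norm_nonneg (a 0)), E1', Real.sqrt_one]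
    · intro z hz
      have h1 := ha ▸ hψ.2.1 z hz
      have h2 : HasSum (fun n : ℕ => a n * z ^ n) (a 0) := by
        have : (fun n : ℕ => a n * z ^ n) = fun n => if n = 0 then a 0 else 0 := by
          funext n
          rcases n with _ | n
          · simp
          · simp [hzero n]
        rw [this]
        exact hasSum_ite_eq 0 _
      exact h1.unique h2
  · rintro ⟨c, hc, hcb⟩ f hf
    have hs : ∀ᶠ z in nhds (0:ℂ),
        HasSum (fun n => (c * taylorCoeff f n) * z ^ n) (ψ z * f z) := by
      filter_upwards [hball] with z hz
      rw [hcb z hz]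
      have h1 := (hf.2.1 z hz).mul_left c
      simpa [mul_assoc] using h1
    have hco : ∀ n, taylorCoeff (fun z => ψ z * f z) n = c * taylorCoeff f n :=
      taylorCoeff_eq hs
    rw [s2Norm, s2Norm, s2NormSq, s2NormSq]
    simp only [hco, norm_mul, hc, one_mul]
end
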